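/- Let I = (I_n)_{n≥1} be an Inc-invariant chain of ideals with stability index r. Then for any n ≥ r and any subset Λ ⊆ {0,1,...,n} with |Λ| = r + 1, it holds that I_{n+1} = Σ_{k∈Λ} σ_k(I_n), where σ_k(I_n) denotes the ideal of R_{n+1} generated by the images of elements of I_n under σ_k. -/
import Mathlib


open MvPolynomial

/-- The strictly increasing map `σ_k : ℕ → ℕ` fixing `i ≤ k` and sending
`i ↦ i + 1` for `i ≥ k + 1`. -/
def sigmaMap (k : ℕ) : ℕ → ℕ := fun i => if i ≤ k then i else i + 1

/-- The ideal `⟨Inc_{m,n}(I)⟩` generated by all images of elements of `I` under strictly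
increasing maps `π` with `π(m) ≤ n`. -/
noncomputable def incSpan (K : Type) [Field K] (I : Ideal (MvPolynomial ℕ K)) (m n : ℕ) :
    Ideal (MvPolynomial ℕ K) :=
  Ideal.span {f | ∃ π : ℕ → ℕ, StrictMono π ∧ π m ≤ n ∧ ∃ g ∈ I, f = rename π g}

/-- The ideal `σ_k(I)` generated by the image of `I` under `σ_k`. -/
noncomputable def sigmaIdeal (K : Type) [Field K] (k : ℕ) (I : Ideal (MvPolynomial ℕ K)) :
    Ideal (MvPolynomial ℕ K) :=
  Ideal.span ((rename (sigmaMap k)) '' I)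

/-- Renaming along two maps that agree on the variables of `p` gives the same result. -/
lemma rename_congr_vars {σ τ R : Type*} [CommSemiring R] {f g : σ → τ}
    {p : MvPolynomial σ R} (h : ∀ i ∈ p.vars, f i = g i) :
    rename f p = rename g p := by
  show (rename f).toRingHom p = (rename g).toRingHom p
  refine hom_congr_vars ?_ (fun i hi _ => ?_) rfl
  · ext1; simp
  · simp [h i hi]

theorem chain_sum_decomposition (K : Type) [Field K]
    (I : ℕ → Ideal (MvPolynomial ℕ K)) (r : ℕ)
    (hsupp : ∀ n, I n = Ideal.span ((I n : Set (MvPolynomial ℕ K)) ∩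
      ↑(MvPolynomial.supported K {i | 1 ≤ i ∧ i ≤ n})))
    (hinv : ∀ m n, m ≤ n → incSpan K (I m) m n ≤ I n)
    (hstab : ∀ m n, r ≤ m → m ≤ n → incSpan K (I m) m n = I n)
    (hsum : ∀ n, r ≤ n → I (n + 1) = ⨆ k ∈ Finset.range (n + 1), sigmaIdeal K k (I n)) :
    ∀ n, r ≤ n → ∀ Λ : Finset ℕ, ↑Λ ⊆ Set.Iic n → Λ.card = r + 1 →
      I (n + 1) = ⨆ k ∈ Λ, sigmaIdeal K k (I n) := by
  intro n hn Λ hΛ hcard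
  classical
  have hσSM : ∀ k : ℕ, StrictMono (sigmaMap k) := fun k a b hab => by
    simp only [sigmaMap]; split <;> split <;> omega
  apply le_antisymm
  · -- hard direction: I (n+1) ≤ ⨆
    rw [← hstab r (n + 1) le_rfl (by omega)]
    apply Ideal.span_le.mpr
    rintro f ⟨π, hπ, hπr, g, hg, rfl⟩
    -- reduce to generators supported in variables 1..r
    have hmap : rename π g ∈ Ideal.span ((rename π) ''
        ((I r : Set (MvPolynomial ℕ K)) ∩ ↑(supported K {i | 1 ≤ i ∧ i ≤ r}))) := by
      have h1 : rename π g ∈ Ideal.map (rename π).toRingHom (I r) :=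
        Ideal.mem_map_of_mem _ hg
      rwa [hsupp r, Ideal.map_span] at h1
    refine Ideal.span_le.mpr ?_ hmap
    rintro f ⟨g', ⟨hg', hgsupp⟩, rfl⟩
    -- choose a good index j ∈ Λ
    set F : Finset ℕ := (Finset.Icc 1 r).image (fun i => π i - 1) with hF
    have hFcard : F.card ≤ r := le_trans Finset.card_image_le (by simp [Nat.card_Icc])
    obtain ⟨j, hjΛ, hjF⟩ : ∃ j ∈ Λ, j ∉ F := by
      by_contra h
      push_neg at h
      have := Finset.card_le_card (fun x hx => h x hx)
      omega
    have hjn : j ≤ n := hΛ hjΛ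
    have hkey : ∀ i, 1 ≤ i → i ≤ r → π i ≠ j + 1 := by
      intro i h1 h2 he
      exact hjF (Finset.mem_image.mpr ⟨i, Finset.mem_Icc.mpr ⟨h1, h2⟩, by omega⟩)
    set τ : ℕ → ℕ := fun i => if i ≤ r then (if π i ≤ j then π i else π i - 1) else n + i
      with hτ
    have hτr : τ r ≤ n := by
      have hπrn : π r ≤ n + 1 := hπr
      simp only [hτ, le_refl, if_pos]
      split <;> omega
    have hτSM : StrictMono τ := by
      apply strictMono_nat_of_lt_succ
      intro i
      rcases le_or_gt (i + 1) r with h | h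
      · have h1 : π i < π (i + 1) := hπ (lt_add_one i)
        have h2 := hkey (i + 1) (by omega) h
        simp only [hτ, if_pos h, if_pos (by omega : i ≤ r)]
        split <;> split <;> omega
      · rcases le_or_gt i r with h' | h'
        · have hi : i = r := by omega
          subst hi
          have h2 : τ (i + 1) = n + (i + 1) := if_neg (by omega)
          omega
        · simp only [hτ, if_neg (by omega : ¬ i ≤ r), if_neg (by omega : ¬ i + 1 ≤ r)]
          omega
    have hvars : ∀ i ∈ g'.vars, π i = (sigmaMap j ∘ τ) i := by
      intro i hi
      have hi' : 1 ≤ i ∧ i ≤ r :=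
        (mem_supported.mp (SetLike.mem_coe.mp hgsupp)) (Finset.mem_coe.mpr hi)
      have hne := hkey i hi'.1 hi'.2
      simp only [Function.comp, hτ, sigmaMap, if_pos hi'.2]
      split <;> [rfl; (split <;> omega)]
    have hmem : rename τ g' ∈ I n :=
      hinv r n hn (Ideal.subset_span ⟨τ, hτSM, hτr, g', hg', rfl⟩)
    have hmem2 : rename π g' ∈ sigmaIdeal K j (I n) := by
      have he : rename π g' = rename (sigmaMap j) (rename τ g') := by
        rw [rename_rename]
        exact rename_congr_vars hvars
      rw [he]
      exact Ideal.subset_span ⟨rename τ g', hmem, rfl⟩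
    exact (le_iSup₂ (f := fun k (_ : k ∈ Λ) => sigmaIdeal K k (I n)) j hjΛ) hmem2
  · -- easy direction: ⨆ ≤ I (n+1)
    apply iSup₂_le
    intro j hjΛ
    refine le_trans ?_ (hinv n (n + 1) (by omega))
    apply Ideal.span_le.mpr
    rintro f ⟨g, hg, rfl⟩
    exact Ideal.subset_span
      ⟨sigmaMap j, hσSM j, by simp only [sigmaMap]; split <;> omega, g, hg, rfl⟩
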